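/- Let w ∈ S_n be 1432-avoiding, let T be a set-valued Rothe tableau of shape D(w) flagged by (1,...,n), and fix r ≥ 1. Define E(T) to be the set of squares B of D(w) with T(B) ∩ {r, r+1} ≠ ∅, P(T) the squares of E(T) whose column contains exactly one square of E(T), and Q(T) = E(T) \ P(T). Then for any (i,j) ∈ P(T), there do not exist squares (i,k) and (h,k) in Q(T) with k > j and h < i. -/
import Mathlib


open Finset

/-- The Rothe diagram of `w` (0-based): squares `(i,j)` with `w i > j` and `w⁻¹ j > i`. -/
def RD {n : ℕ} (w : Equiv.Perm (Fin n)) : Finset (Fin n × Fin n) :=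
  Finset.univ.filter (fun p => p.2 < w p.1 ∧ p.1 < w⁻¹ p.2)

/-- `m_{ij}(w)`: the number of squares of `D(w)` in row `i` weakly left of column `j`. -/
def mStat {n : ℕ} (w : Equiv.Perm (Fin n)) (i j : Fin n) : ℕ :=
  ((RD w).filter (fun p => p.1 = i ∧ p.2 ≤ j)).card

/-- A set-valued Rothe tableau of shape `D(w)` flagged by `(1,2,…,n)`:
each square of `D(w)` carries a finite nonempty set of positive integers,
rows are weakly decreasing (for `j < j'` in a row, `max T(i,j') ≤ min T(i,j)`),
columns are strictly increasing, and every entry in (0-based) row `i` is `≤ i+1`. -/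
def IsSVRT {n : ℕ} (w : Equiv.Perm (Fin n)) (T : Fin n × Fin n → Finset ℕ) : Prop :=
  (∀ p ∈ RD w, (T p).Nonempty) ∧
  (∀ i j j' : Fin n, j < j' → (i, j) ∈ RD w → (i, j') ∈ RD w →
      ∀ a ∈ T (i, j'), ∀ b ∈ T (i, j), a ≤ b) ∧
  (∀ i i' j : Fin n, i < i' → (i, j) ∈ RD w → (i', j) ∈ RD w →
      ∀ a ∈ T (i, j), ∀ b ∈ T (i', j), a < b) ∧
  (∀ p ∈ RD w, ∀ a ∈ T p, 1 ≤ a ∧ a ≤ (p.1 : ℕ) + 1)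

/-- `E(T)`: the squares of `D(w)` whose set contains `r` or `r+1`. -/
def Eset {n : ℕ} (w : Equiv.Perm (Fin n)) (T : Fin n × Fin n → Finset ℕ) (r : ℕ) :
    Finset (Fin n × Fin n) :=
  (RD w).filter (fun p => r ∈ T p ∨ r + 1 ∈ T p)

/-- `P(T)`: squares of `E(T)` that are alone in their column within `E(T)`. -/
def Pset {n : ℕ} (w : Equiv.Perm (Fin n)) (T : Fin n × Fin n → Finset ℕ) (r : ℕ) :
    Finset (Fin n × Fin n) :=
  (Eset w T r).filter (fun p => ∀ q ∈ Eset w T r, q.2 = p.2 → q = p)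

/-- `Q(T) = E(T) \ P(T)`. -/
def Qset {n : ℕ} (w : Equiv.Perm (Fin n)) (T : Fin n × Fin n → Finset ℕ) (r : ℕ) :
    Finset (Fin n × Fin n) :=
  Eset w T r \ Pset w T r

def Avoids1432 {n : ℕ} (w : Equiv.Perm (Fin n)) : Prop :=
  ¬ ∃ i1 i2 i3 i4 : Fin n, i1 < i2 ∧ i2 < i3 ∧ i3 < i4 ∧
      w i1 < w i4 ∧ w i4 < w i3 ∧ w i3 < w i2

/-- For `(i,j) ∈ P(T)` there are no squares `(i,k), (h,k) ∈ Q(T)` with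
`k > j` and `h < i`. -/
theorem stmt7 {n : ℕ} (w : Equiv.Perm (Fin n)) (hw : Avoids1432 w)
    (T : Fin n × Fin n → Finset ℕ) (hT : IsSVRT w T)
    (r : ℕ) (hr : 1 ≤ r) (i j : Fin n) (hP : (i, j) ∈ Pset w T r) :
    ¬ ∃ h k : Fin n, (i, k) ∈ Qset w T r ∧ (h, k) ∈ Qset w T r ∧ j < k ∧ h < i := by
  rintro ⟨h, k, hik, hhk, hjk, hhi⟩
  obtain ⟨hne, hrow, hcol, hflag⟩ := hT
  simp only [Pset, mem_filter] at hP
  obtain ⟨hijE, halone⟩ := hP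
  have hikE : (i, k) ∈ Eset w T r := (mem_sdiff.mp hik).1
  have hhkE : (h, k) ∈ Eset w T r := (mem_sdiff.mp hhk).1
  simp only [Eset, mem_filter] at hijE hikE hhkE
  obtain ⟨hijD, hij⟩ := hijE
  obtain ⟨hikD, hikm⟩ := hikE
  obtain ⟨hhkD, hhkm⟩ := hhkE
  -- elements of T(h,k) are < elements of T(i,k)
  have hcolk := hcol h i k hhi hhkD hikD
  -- extract an element a ∈ T(h,k) ∩ {r,r+1} and b ∈ T(i,k) ∩ {r,r+1}
  have hrhk : r ∈ T (h, k) := by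
    rcases hhkm with ha | ha
    · exact ha
    · exfalso
      rcases hikm with hb | hb
      · exact absurd (hcolk _ ha _ hb) (by omega)
      · exact absurd (hcolk _ ha _ hb) (by omega)
  have hrik : r + 1 ∈ T (i, k) := by
    rcases hikm with hb | hb
    · exact absurd (hcolk _ hrhk _ hb) (by omega)
    · exact hb
  -- (h, j) ∈ RD w
  have hRDmem : ∀ p : Fin n × Fin n, p ∈ RD w ↔ p.2 < w p.1 ∧ p.1 < w⁻¹ p.2 := by
    intro p; simp [RD]
  have hhjD : (h, j) ∈ RD w := by
    rw [hRDmem]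
    have h1 := (hRDmem (h, k)).mp hhkD
    have h2 := (hRDmem (i, j)).mp hijD
    exact ⟨lt_trans hjk h1.1, lt_trans hhi h2.2⟩
  -- row i : elements of T(i,j) are ≥ r+1
  have hrowi := hrow i j k hjk hijD hikD
  have hb : r + 1 ∈ T (i, j) := by
    rcases hij with hb | hb
    · exact absurd (hrowi _ hrik _ hb) (by omega)
    · exact hb
  -- row h : elements of T(h,j) are ≥ r
  have hrowh := hrow h j k hjk hhjD hhkD
  -- column j : elements of T(h,j) are < elements of T(i,j)
  have hcolj := hcol h i j hhi hhjD hijD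
  obtain ⟨a, ha⟩ := hne _ hhjD
  have har : a = r := by
    have h1 := hrowh _ hrhk _ ha
    have h2 := hcolj _ ha _ hb
    omega
  have : (h, j) ∈ Eset w T r := by
    simp only [Eset, mem_filter]
    exact ⟨hhjD, Or.inl (har ▸ ha)⟩
  have := halone _ this rfl
  have : h = i := (Prod.mk.injEq _ _ _ _).mp this |>.1
  exact absurd this (ne_of_lt hhi)
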